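/- If an extended open graph (G, I, O, λ) has a gflow and X ∈ λ(u) for every u ∈ Iᶜ ∩ Oᶜ, then (G, I, O, λ) has an X-NF gflow, i.e., a gflow g with Odd(g(u)) ⊆ {u} ∪ O for all u ∈ Oᶜ. -/

import Mathlib

open scoped symmDiff

inductive Pauli | X | Y | Z
deriving DecidableEq

inductive MPlane | XY | XZ | YZ
deriving DecidableEq

/-- The set of Pauli operators defining a measurement plane. -/
def MPlane.paulis : MPlane → Finset Pauli
  | .XY => {.X, .Y}
  | .XZ => {.X, .Z}
  | .YZ => {.Y, .Z}

variable {V : Type} [Fintype V] [DecidableEq V]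

/-- Odd neighbourhood: vertices with an odd number of neighbours in `A`. -/
def oddNbhd (G : SimpleGraph V) [DecidableRel G.Adj] (A : Finset V) : Finset V :=
  Finset.univ.filter fun w => Odd (A.filter (G.Adj w)).card

/-- `f` is extensive w.r.t. the strict order `r`. -/
def IsExtensive (O : Finset V) (r : V → V → Prop) (f : V → Finset V) : Prop :=
  ∀ u ∉ O, ∀ v ∈ f u, v ≠ u → r u v

/-- gflow of an extended open graph `(G, I, O, lam)`. -/
def IsGflow (G : SimpleGraph V) [DecidableRel G.Adj]
    (I O : Finset V) (lam : V → MPlane) (g : V → Finset V) : Prop :=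
  (∀ u ∉ O, g u ⊆ Iᶜ) ∧
  (∃ r : V → V → Prop, IsStrictOrder V r ∧
    IsExtensive O r (fun u => g u ∪ oddNbhd G (g u))) ∧
  ∀ u ∉ O,
    (lam u = .XY → u ∈ oddNbhd G (g u) ∧ u ∉ g u) ∧
    (lam u = .XZ → u ∈ g u ∧ u ∈ oddNbhd G (g u)) ∧
    (lam u = .YZ → u ∈ g u ∧ u ∉ oddNbhd G (g u))

/-- σ-normal forms for gflows. -/
def IsNF (σ : Pauli) (G : SimpleGraph V) [DecidableRel G.Adj]
    (O : Finset V) (g : V → Finset V) : Prop :=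
  match σ with
  | .X => ∀ u ∉ O, oddNbhd G (g u) ⊆ insert u O
  | .Y => ∀ u ∉ O, (g u ∆ oddNbhd G (g u)) ⊆ insert u O
  | .Z => ∀ u ∉ O, g u ⊆ insert u O


/- ### Auxiliary lemmas -/

section Aux

set_option linter.unusedSectionVars false

instance : Std.Commutative (α := Finset V) (· ∆ ·) := ⟨symmDiff_comm⟩
instance : Std.Associative (α := Finset V) (· ∆ ·) := ⟨symmDiff_assoc⟩

lemma mem_symmDiff_iff {s t : Finset V} {a : V} :
    a ∈ s ∆ t ↔ ((a ∈ s) ↔ a ∉ t) := by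
  rw [Finset.mem_symmDiff]; tauto

lemma oddNbhd_empty (G : SimpleGraph V) [DecidableRel G.Adj] :
    oddNbhd G (∅ : Finset V) = ∅ := by
  simp [oddNbhd]

lemma mem_oddNbhd_iff (G : SimpleGraph V) [DecidableRel G.Adj] {A : Finset V} {w : V} :
    w ∈ oddNbhd G A ↔ Odd (A.filter (G.Adj w)).card := by
  simp [oddNbhd]

lemma odd_card_symmDiff {s t : Finset V} :
    Odd ((s ∆ t).card) ↔ ((Odd s.card) ↔ ¬ Odd t.card) := by
  have h1 : s ∆ t = (s \ t) ∪ (t \ s) := by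
    rw [symmDiff_def]; rfl
  have hd : Disjoint (s \ t) (t \ s) := disjoint_sdiff_sdiff
  have hcs : (s \ t).card + (s ∩ t).card = s.card := Finset.card_sdiff_add_card_inter s t
  have hct : (t \ s).card + (t ∩ s).card = t.card := Finset.card_sdiff_add_card_inter t s
  have hst : (s ∩ t).card = (t ∩ s).card := by rw [Finset.inter_comm]
  rw [h1, Finset.card_union_of_disjoint hd]
  simp only [Nat.odd_iff] at *
  omega

lemma mem_oddNbhd_symmDiff (G : SimpleGraph V) [DecidableRel G.Adj]
    {A B : Finset V} {w : V} :
    w ∈ oddNbhd G (A ∆ B) ↔ ((w ∈ oddNbhd G A) ↔ w ∉ oddNbhd G B) := by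
  have h : (A ∆ B).filter (G.Adj w) = (A.filter (G.Adj w)) ∆ (B.filter (G.Adj w)) := by
    ext x; simp only [Finset.mem_symmDiff, Finset.mem_filter]; tauto
  simp only [mem_oddNbhd_iff, h, odd_card_symmDiff]

/-- Iterated symmetric difference over a finset. -/
def sdSum {ι : Type*} [DecidableEq ι] (S : Finset ι) (f : ι → Finset V) : Finset V :=
  S.fold (· ∆ ·) ∅ f

lemma sdSum_empty {ι : Type*} [DecidableEq ι] (f : ι → Finset V) :
    sdSum (∅ : Finset ι) f = ∅ := rfl

lemma sdSum_insert {ι : Type*} [DecidableEq ι] {S : Finset ι} {a : ι} (ha : a ∉ S)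
    (f : ι → Finset V) : sdSum (insert a S) f = f a ∆ sdSum S f :=
  Finset.fold_insert ha

/-- Membership in an iterated symmetric difference. -/
lemma mem_sdSum {ι : Type*} [DecidableEq ι] (S : Finset ι) (f : ι → Finset V) (w : V) :
    w ∈ sdSum S f ↔ Odd (S.filter fun v => w ∈ f v).card := by
  classical
  induction S using Finset.induction_on with
  | empty => simp [sdSum_empty]
  | insert a s ha ih =>
    rw [sdSum_insert ha, mem_symmDiff_iff, ih, Finset.filter_insert]
    by_cases hw : w ∈ f a
    · rw [if_pos hw, Finset.card_insert_of_notMem (fun hc => ha (Finset.mem_filter.1 hc).1)]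
      simp only [hw, true_iff, Nat.odd_iff]
      omega
    · rw [if_neg hw]; tauto

lemma mem_oddNbhd_sdSum (G : SimpleGraph V) [DecidableRel G.Adj]
    {ι : Type*} [DecidableEq ι] (S : Finset ι) (f : ι → Finset V) (w : V) :
    w ∈ oddNbhd G (sdSum S f) ↔ Odd (S.filter fun v => w ∈ oddNbhd G (f v)).card := by
  classical
  induction S using Finset.induction_on with
  | empty => simp [sdSum_empty, oddNbhd_empty]
  | insert a s ha ih =>
    rw [sdSum_insert ha, mem_oddNbhd_symmDiff, ih, Finset.filter_insert]
    by_cases hw : w ∈ oddNbhd G (f a)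
    · rw [if_pos hw, Finset.card_insert_of_notMem (fun hc => ha (Finset.mem_filter.1 hc).1)]
      simp only [hw, true_iff, Nat.odd_iff]
      omega
    · rw [if_neg hw]; tauto

lemma card_attach_filter (S : Finset V) (p : V → Prop) [DecidablePred p] :
    (S.attach.filter fun x => p x.1).card = (S.filter p).card := by
  rw [Finset.filter_attach, Finset.card_map, Finset.card_attach]

lemma sdSum_attach {S : Finset V} (f : V → Finset V) :
    sdSum S.attach (fun x => f x.1) = sdSum S f := by
  ext w
  rw [mem_sdSum, mem_sdSum, card_attach_filter S (fun v => w ∈ f v)]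

/-- The normal-form correction construction. -/
def mkNF (G : SimpleGraph V) [DecidableRel G.Adj] (O : Finset V) (g : V → Finset V)
    (m : V → ℕ) (hm : ∀ u, ∀ v ∈ oddNbhd G (g u) \ insert u O, m v < m u) : V → Finset V
  | u => g u ∆ sdSum (oddNbhd G (g u) \ insert u O).attach
      (fun x => mkNF G O g m hm x.1)
termination_by u => m u
decreasing_by exact hm u x.1 x.2

lemma mkNF_eq (G : SimpleGraph V) [DecidableRel G.Adj] (O : Finset V) (g : V → Finset V)
    (m : V → ℕ) (hm : ∀ u, ∀ v ∈ oddNbhd G (g u) \ insert u O, m v < m u) (u : V) :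
    mkNF G O g m hm u
      = g u ∆ sdSum (oddNbhd G (g u) \ insert u O) (mkNF G O g m hm) := by
  rw [mkNF, sdSum_attach]

lemma mem_mkNF (G : SimpleGraph V) [DecidableRel G.Adj] (O : Finset V) (g : V → Finset V)
    (m : V → ℕ) (hm : ∀ u, ∀ v ∈ oddNbhd G (g u) \ insert u O, m v < m u) (u w : V) :
    w ∈ mkNF G O g m hm u ↔
      ((w ∈ g u) ↔
        ¬ Odd (((oddNbhd G (g u) \ insert u O)).filter
          (fun v => w ∈ mkNF G O g m hm v)).card) := by
  rw [mkNF_eq, mem_symmDiff_iff, mem_sdSum]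

lemma mem_oddNbhd_mkNF (G : SimpleGraph V) [DecidableRel G.Adj] (O : Finset V)
    (g : V → Finset V)
    (m : V → ℕ) (hm : ∀ u, ∀ v ∈ oddNbhd G (g u) \ insert u O, m v < m u) (u w : V) :
    w ∈ oddNbhd G (mkNF G O g m hm u) ↔
      ((w ∈ oddNbhd G (g u)) ↔
        ¬ Odd (((oddNbhd G (g u) \ insert u O)).filter
          (fun v => w ∈ oddNbhd G (mkNF G O g m hm v))).card) := by
  rw [mkNF_eq, mem_oddNbhd_symmDiff, mem_oddNbhd_sdSum]

end Aux

/-- Theorem 1 for σ = X: if every non-input non-output measurement plane contains X,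
then a gflow can be put into X-normal form. -/
theorem exists_XNF_gflow (G : SimpleGraph V) [DecidableRel G.Adj]
    (I O : Finset V) (lam : V → MPlane)
    (h : ∃ g : V → Finset V, IsGflow G I O lam g)
    (hplane : ∀ u, u ∉ I → u ∉ O → Pauli.X ∈ (lam u).paulis) :
    ∃ g : V → Finset V, IsGflow G I O lam g ∧ IsNF .X G O g := by
  classical
  obtain ⟨g₁, hsub₁, ⟨r, hr, hext₁⟩, hpl₁⟩ := h
  haveI : IsTrans V r := hr.2
  haveI : IsIrrefl V r := hr.1
  -- zero the flow out on O (values there are irrelevant)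
  set g : V → Finset V := fun u => if u ∈ O then ∅ else g₁ u with hgdef
  have hgO : ∀ u ∉ O, g u = g₁ u := fun u hu => if_neg hu
  have hsub : ∀ u ∉ O, g u ⊆ Iᶜ := fun u hu => (hgO u hu) ▸ hsub₁ u hu
  have hext : ∀ u ∉ O, ∀ v ∈ g u ∪ oddNbhd G (g u), v ≠ u → r u v := by
    intro u hu v hv hne; rw [hgO u hu] at hv; exact hext₁ u hu v hv hne
  have hpl : ∀ u ∉ O,
      (lam u = .XY → u ∈ oddNbhd G (g u) ∧ u ∉ g u) ∧
      (lam u = .XZ → u ∈ g u ∧ u ∈ oddNbhd G (g u)) ∧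
      (lam u = .YZ → u ∈ g u ∧ u ∉ oddNbhd G (g u)) := by
    intro u hu; rw [hgO u hu]; exact hpl₁ u hu
  -- the plane YZ cannot occur outside O
  have hYZ : ∀ u ∉ O, lam u ≠ .YZ := by
    intro u hu hlu
    have hI : u ∉ I := by
      have h1 := ((hpl u hu).2.2 hlu).1
      have h2 := hsub u hu h1
      simpa using h2
    have h3 := hplane u hI hu
    rw [hlu] at h3
    simp [MPlane.paulis] at h3
  have fact0 : ∀ u ∉ O, u ∈ oddNbhd G (g u) := by
    intro u hu
    rcases hlu : lam u with _ | _ | _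
    · exact ((hpl u hu).1 hlu).1
    · exact ((hpl u hu).2.1 hlu).2
    · exact absurd hlu (hYZ u hu)
  -- a measure compatible with r
  set m : V → ℕ := fun u => (Finset.univ.filter fun v => r u v).card with hmdef
  have hmlt : ∀ u v, r u v → m v < m u := by
    intro u v huv
    have hss : (Finset.univ.filter fun w => r v w) ⊆ (Finset.univ.filter fun w => r u w) := by
      intro w hw
      simp only [Finset.mem_filter, Finset.mem_univ, true_and] at hw ⊢
      exact _root_.trans huv hw
    apply Finset.card_lt_card
    rw [Finset.ssubset_iff_of_subset hss]
    exact ⟨v, by simp [huv], by simp [irrefl_of r v]⟩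
  have hm : ∀ u, ∀ v ∈ oddNbhd G (g u) \ insert u O, m v < m u := by
    intro u v hv
    rw [Finset.mem_sdiff, Finset.mem_insert] at hv
    push_neg at hv
    by_cases hu : u ∈ O
    · exfalso
      have : g u = ∅ := if_pos hu
      rw [this, oddNbhd_empty] at hv
      exact absurd hv.1 (Finset.notMem_empty v)
    · exact hmlt u v (hext u hu v (Finset.mem_union_right _ hv.1) hv.2.1)
  set g2 : V → Finset V := mkNF G O g m hm with hg2def
  -- the main induction
  have key : ∀ n, ∀ u, m u < n → u ∉ O →
      (u ∈ g2 u ↔ u ∈ g u) ∧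
      (u ∈ oddNbhd G (g2 u)) ∧
      (g2 u ⊆ Iᶜ) ∧
      (∀ w, (w ∈ g2 u ∨ w ∈ oddNbhd G (g2 u)) → w ≠ u → r u w) ∧
      (oddNbhd G (g2 u) ⊆ insert u O) := by
    intro n
    induction n with
    | zero => intro u hu; omega
    | succ n IH =>
      intro u hun huO
      set S : Finset V := oddNbhd G (g u) \ insert u O with hSdef
      have hSfact : ∀ v ∈ S, v ∈ oddNbhd G (g u) ∧ v ∉ O ∧ v ≠ u ∧ r u v ∧ m v < n := by
        intro v hv
        rw [hSdef, Finset.mem_sdiff, Finset.mem_insert] at hv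
        push_neg at hv
        obtain ⟨h1, h2, h3⟩ := hv
        have hruv : r u v := hext u huO v (Finset.mem_union_right _ h1) h2
        exact ⟨h1, h3, h2, hruv, by have := hmlt u v hruv; omega⟩
      have IH' : ∀ v ∈ S,
          (v ∈ g2 v ↔ v ∈ g v) ∧
          (v ∈ oddNbhd G (g2 v)) ∧
          (g2 v ⊆ Iᶜ) ∧
          (∀ w, (w ∈ g2 v ∨ w ∈ oddNbhd G (g2 v)) → w ≠ v → r v w) ∧
          (oddNbhd G (g2 v) ⊆ insert v O) := by
        intro v hv
        obtain ⟨_, h2, _, _, h5⟩ := hSfact v hv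
        exact IH v h5 h2
      have memchar : ∀ w, w ∈ g2 u ↔
          ((w ∈ g u) ↔ ¬ Odd (S.filter (fun v => w ∈ g2 v)).card) := by
        intro w; exact mem_mkNF G O g m hm u w
      have oddchar : ∀ w, w ∈ oddNbhd G (g2 u) ↔
          ((w ∈ oddNbhd G (g u)) ↔
            ¬ Odd (S.filter (fun v => w ∈ oddNbhd G (g2 v))).card) := by
        intro w; exact mem_oddNbhd_mkNF G O g m hm u w
      -- helper to extract a witness from an odd filter
      have getwit : ∀ (p : V → Prop), ∀ (_ : DecidablePred p),
          Odd (S.filter p).card → ∃ v ∈ S, p v := by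
        intro p _ hodd
        have : (S.filter p).Nonempty := by
          rw [Finset.nonempty_iff_ne_empty]
          intro hc
          rw [hc] at hodd
          simp at hodd
        obtain ⟨v, hv⟩ := this
        rw [Finset.mem_filter] at hv
        exact ⟨v, hv.1, hv.2⟩
      -- claim 1
      have c1 : u ∈ g2 u ↔ u ∈ g u := by
        rw [memchar u]
        have hempty : S.filter (fun v => u ∈ g2 v) = ∅ := by
          rw [Finset.filter_eq_empty_iff]
          intro v hv hc
          obtain ⟨_, _, hne, hruv, _⟩ := hSfact v hv
          have := (IH' v hv).2.2.2.1 u (Or.inl hc) (Ne.symm hne)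
          exact irrefl_of r u (_root_.trans hruv this)
        rw [hempty]
        simp
      -- claim 2
      have c2 : u ∈ oddNbhd G (g2 u) := by
        rw [oddchar u]
        have hempty : S.filter (fun v => u ∈ oddNbhd G (g2 v)) = ∅ := by
          rw [Finset.filter_eq_empty_iff]
          intro v hv hc
          obtain ⟨_, _, hne, _, _⟩ := hSfact v hv
          have := (IH' v hv).2.2.2.2 hc
          rw [Finset.mem_insert] at this
          rcases this with h | h
          · exact hne h.symm
          · exact huO h
        rw [hempty]
        simp [fact0 u huO]
      -- claim 3
      have c3 : g2 u ⊆ Iᶜ := by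
        intro w hw
        rw [memchar w] at hw
        by_cases hwg : w ∈ g u
        · exact hsub u huO hwg
        · have hodd : Odd (S.filter (fun v => w ∈ g2 v)).card := by tauto
          obtain ⟨v, hv, hwv⟩ := getwit _ _ hodd
          exact (IH' v hv).2.2.1 hwv
      -- claim 4
      have c4 : ∀ w, (w ∈ g2 u ∨ w ∈ oddNbhd G (g2 u)) → w ≠ u → r u w := by
        intro w hw hne
        rcases hw with hw | hw
        · rw [memchar w] at hw
          by_cases hwg : w ∈ g u
          · exact hext u huO w (Finset.mem_union_left _ hwg) hne
          · have hodd : Odd (S.filter (fun v => w ∈ g2 v)).card := by tauto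
            obtain ⟨v, hv, hwv⟩ := getwit _ _ hodd
            obtain ⟨_, _, _, hruv, _⟩ := hSfact v hv
            by_cases hwvne : w = v
            · rw [hwvne]; exact hruv
            · exact _root_.trans hruv ((IH' v hv).2.2.2.1 w (Or.inl hwv) hwvne)
        · rw [oddchar w] at hw
          by_cases hwg : w ∈ oddNbhd G (g u)
          · exact hext u huO w (Finset.mem_union_right _ hwg) hne
          · have hodd : Odd (S.filter (fun v => w ∈ oddNbhd G (g2 v))).card := by tauto
            obtain ⟨v, hv, hwv⟩ := getwit _ _ hodd
            obtain ⟨_, _, _, hruv, _⟩ := hSfact v hv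
            by_cases hwvne : w = v
            · rw [hwvne]; exact hruv
            · exact _root_.trans hruv ((IH' v hv).2.2.2.1 w (Or.inr hwv) hwvne)
      -- claim 5
      have c5 : oddNbhd G (g2 u) ⊆ insert u O := by
        intro w hw
        by_contra hwO
        rw [Finset.mem_insert] at hwO
        push_neg at hwO
        obtain ⟨hwu, hwO⟩ := hwO
        rw [oddchar w] at hw
        have hfilt : S.filter (fun v => w ∈ oddNbhd G (g2 v)) = S.filter (fun v => v = w) := by
          apply Finset.filter_congr
          intro v hv
          constructor
          · intro hc
            have := (IH' v hv).2.2.2.2 hc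
            rw [Finset.mem_insert] at this
            rcases this with h | h
            · exact h.symm
            · exact absurd h hwO
          · intro hvw
            rw [hvw] at hv ⊢
            exact (IH' w hv).2.1
        rw [hfilt, Finset.filter_eq'] at hw
        by_cases hwS : w ∈ S
        · rw [if_pos hwS] at hw
          have hwodd : w ∈ oddNbhd G (g u) := (hSfact w hwS).1
          simp [hwodd] at hw
        · rw [if_neg hwS] at hw
          have hwodd : w ∉ oddNbhd G (g u) := by
            intro hc
            apply hwS
            rw [hSdef, Finset.mem_sdiff, Finset.mem_insert]
            push_neg
            exact ⟨hc, hwu, hwO⟩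
          simp [hwodd] at hw
      exact ⟨c1, c2, c3, c4, c5⟩
  have Q : ∀ u, u ∉ O →
      (u ∈ g2 u ↔ u ∈ g u) ∧
      (u ∈ oddNbhd G (g2 u)) ∧
      (g2 u ⊆ Iᶜ) ∧
      (∀ w, (w ∈ g2 u ∨ w ∈ oddNbhd G (g2 u)) → w ≠ u → r u w) ∧
      (oddNbhd G (g2 u) ⊆ insert u O) :=
    fun u hu => key (m u + 1) u (Nat.lt_succ_self _) hu
  refine ⟨g2, ⟨?_, ⟨r, hr, ?_⟩, ?_⟩, ?_⟩
  · exact fun u hu => (Q u hu).2.2.1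
  · intro u hu v hv hne
    rw [Finset.mem_union] at hv
    exact (Q u hu).2.2.2.1 v hv hne
  · intro u hu
    refine ⟨?_, ?_, ?_⟩
    · intro hlu
      have h1 := (hpl u hu).1 hlu
      exact ⟨(Q u hu).2.1, fun hc => h1.2 (((Q u hu).1).1 hc)⟩
    · intro hlu
      have h1 := (hpl u hu).2.1 hlu
      exact ⟨((Q u hu).1).2 h1.1, (Q u hu).2.1⟩
    · intro hlu
      exact absurd hlu (hYZ u hu)
  · intro u hu
    exact (Q u hu).2.2.2.2
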